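/- If A and B are positive semidefinite n×n complex matrices forming a monotone pair, and Z is a normal n×n matrix, then the Frobenius norm of AZB is at most the Frobenius norm of ZAB. -/

import Mathlib

open Matrix ComplexOrder

/-- Apply a real function to a Hermitian matrix via the spectral decomposition. -/
noncomputable def hermFun {n : ℕ} {C : Matrix (Fin n) (Fin n) ℂ} (hC : C.IsHermitian)
    (f : ℝ → ℝ) : Matrix (Fin n) (Fin n) ℂ :=
  (hC.eigenvectorUnitary : Matrix (Fin n) (Fin n) ℂ) *
    Matrix.diagonal (fun i => (f (hC.eigenvalues i) : ℂ)) *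
    (star (hC.eigenvectorUnitary : Matrix (Fin n) (Fin n) ℂ))

/-- `(A, B)` is a monotone pair: `A = f(C)`, `B = g(C)` for a Hermitian `C` and
nondecreasing real functions `f`, `g`. -/
def MonotonePair {n : ℕ} (A B : Matrix (Fin n) (Fin n) ℂ) : Prop :=
  ∃ C : Matrix (Fin n) (Fin n) ℂ, ∃ hC : C.IsHermitian, ∃ f g : ℝ → ℝ,
    Monotone f ∧ Monotone g ∧ A = hermFun hC f ∧ B = hermFun hC g

/-- `(A, B)` is an antimonotone pair: `A = f(C)`, `B = g(C)` for a Hermitian `C`,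
`f` nondecreasing and `g` nonincreasing. -/
def AntimonotonePair {n : ℕ} (A B : Matrix (Fin n) (Fin n) ℂ) : Prop :=
  ∃ C : Matrix (Fin n) (Fin n) ℂ, ∃ hC : C.IsHermitian, ∃ f g : ℝ → ℝ,
    Monotone f ∧ Antitone g ∧ A = hermFun hC f ∧ B = hermFun hC g

/-- The Frobenius (Hilbert–Schmidt) norm `(Tr X*X)^(1/2)`. -/
noncomputable def frobNorm {n : ℕ} (X : Matrix (Fin n) (Fin n) ℂ) : ℝ :=
  Real.sqrt ((Matrix.trace (Xᴴ * X)).re)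

open Finset

/-! ### Auxiliary material -/

private lemma telescope_Ico (p : ℕ → ℝ) {i j : ℕ} (hij : i ≤ j) :
    ∑ k ∈ Finset.Ico i j, (p (k + 1) - p k) = p j - p i := by
  rw [Finset.sum_Ico_eq_sub _ hij, Finset.sum_range_sub, Finset.sum_range_sub]
  ring

private lemma H_bound (n : ℕ) (p q : ℕ → ℝ)
    (hp : ∀ ⦃i j : ℕ⦄, i ≤ j → j < n → p i ≤ p j)
    (hq : ∀ ⦃i j : ℕ⦄, i ≤ j → j < n → q i ≤ q j)
    (hq0 : ∀ j, j < n → 0 ≤ q j)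
    {i j : ℕ} (hi : i < n) (hj : j < n) :
    (∑ k ∈ Finset.range j, q (k + 1) * (p (k + 1) - p k))
      - (∑ k ∈ Finset.range i, q (k + 1) * (p (k + 1) - p k))
      ≤ q j * (p j - p i) := by
  rcases le_total i j with h | h
  · rw [← Finset.sum_Ico_eq_sub _ h, ← telescope_Ico p h, Finset.mul_sum]
    apply Finset.sum_le_sum
    intro k hk
    rw [Finset.mem_Ico] at hk
    have hk1 : k + 1 ≤ j := hk.2
    have hΔ : 0 ≤ p (k + 1) - p k := by
      have := hp (Nat.le_succ k) (lt_of_le_of_lt hk1 hj)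
      linarith
    exact mul_le_mul_of_nonneg_right (hq hk1 hj) hΔ
  · have hS : ∑ k ∈ Finset.Ico j i, q (k + 1) * (p (k + 1) - p k)
        = (∑ k ∈ Finset.range i, q (k + 1) * (p (k + 1) - p k))
          - (∑ k ∈ Finset.range j, q (k + 1) * (p (k + 1) - p k)) :=
      Finset.sum_Ico_eq_sub _ h
    have hlow : q j * (p i - p j) ≤ ∑ k ∈ Finset.Ico j i, q (k + 1) * (p (k + 1) - p k) := by
      rw [← telescope_Ico p h, Finset.mul_sum]
      apply Finset.sum_le_sum
      intro k hk
      rw [Finset.mem_Ico] at hk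
      have hk1 : k + 1 ≤ i := hk.2
      have hΔ : 0 ≤ p (k + 1) - p k := by
        have := hp (Nat.le_succ k) (lt_of_le_of_lt hk1 hi)
        linarith
      exact mul_le_mul_of_nonneg_right (hq (Nat.le_succ_of_le hk.1) (lt_of_le_of_lt hk1 hi)) hΔ
    linarith

private lemma core_sum_ineq (n : ℕ) (w : ℕ → ℕ → ℝ) (p q : ℕ → ℝ)
    (hw : ∀ i j, 0 ≤ w i j)
    (hbal : ∀ j, j < n → ∑ i ∈ Finset.range n, w i j = ∑ i ∈ Finset.range n, w j i)
    (hp : ∀ ⦃i j : ℕ⦄, i ≤ j → j < n → p i ≤ p j)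
    (hq : ∀ ⦃i j : ℕ⦄, i ≤ j → j < n → q i ≤ q j)
    (hq0 : ∀ j, j < n → 0 ≤ q j) :
    ∑ i ∈ Finset.range n, ∑ j ∈ Finset.range n, w i j * (p i * q j)
      ≤ ∑ i ∈ Finset.range n, ∑ j ∈ Finset.range n, w i j * (p j * q j) := by
  set H : ℕ → ℝ := fun i => ∑ k ∈ Finset.range i, q (k + 1) * (p (k + 1) - p k) with hHdef
  have hHsum : ∑ i ∈ Finset.range n, ∑ j ∈ Finset.range n, w i j * H j
      = ∑ i ∈ Finset.range n, ∑ j ∈ Finset.range n, w i j * H i := by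
    rw [Finset.sum_comm]
    calc ∑ j ∈ Finset.range n, ∑ i ∈ Finset.range n, w i j * H j
        = ∑ j ∈ Finset.range n, (∑ i ∈ Finset.range n, w i j) * H j := by
          simp [Finset.sum_mul]
      _ = ∑ j ∈ Finset.range n, (∑ i ∈ Finset.range n, w j i) * H j := by
          refine Finset.sum_congr rfl fun j hj => ?_
          rw [hbal j (Finset.mem_range.mp hj)]
      _ = ∑ j ∈ Finset.range n, ∑ i ∈ Finset.range n, w j i * H j := by
          simp [Finset.sum_mul]
  have hpt : ∀ i ∈ Finset.range n, ∀ j ∈ Finset.range n,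
      0 ≤ w i j * ((p j * q j - p i * q j) - (H j - H i)) := by
    intro i hi j hj
    rw [Finset.mem_range] at hi hj
    apply mul_nonneg (hw i j)
    have := H_bound n p q hp hq hq0 hi hj
    have hq' : q j * (p j - p i) = p j * q j - p i * q j := by ring
    simp only [hHdef]
    linarith [hq'.symm ▸ this]
  have hnn : 0 ≤ ∑ i ∈ Finset.range n, ∑ j ∈ Finset.range n,
      w i j * ((p j * q j - p i * q j) - (H j - H i)) :=
    Finset.sum_nonneg fun i hi => Finset.sum_nonneg fun j hj => hpt i hi j hj
  have expand : ∑ i ∈ Finset.range n, ∑ j ∈ Finset.range n,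
      w i j * ((p j * q j - p i * q j) - (H j - H i))
      = (∑ i ∈ Finset.range n, ∑ j ∈ Finset.range n, w i j * (p j * q j))
        - (∑ i ∈ Finset.range n, ∑ j ∈ Finset.range n, w i j * (p i * q j))
        - ((∑ i ∈ Finset.range n, ∑ j ∈ Finset.range n, w i j * H j)
          - (∑ i ∈ Finset.range n, ∑ j ∈ Finset.range n, w i j * H i)) := by
    simp only [← Finset.sum_sub_distrib]
    refine Finset.sum_congr rfl fun i _ => Finset.sum_congr rfl fun j _ => ?_
    ring
  rw [expand, hHsum] at hnn
  linarith

/-- Lift a `Fin n` indexed vector to `ℕ`. -/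
private def liftV {n : ℕ} (v : Fin n → ℝ) (a : ℕ) : ℝ :=
  if h : a < n then v ⟨a, h⟩ else 0

/-- Lift a doubly `Fin n` indexed array to `ℕ`. -/
private def liftW {n : ℕ} (F : Fin n → Fin n → ℝ) (a b : ℕ) : ℝ :=
  if h : a < n then if h' : b < n then F ⟨a, h⟩ ⟨b, h'⟩ else 0 else 0

private lemma sum_liftW {n : ℕ} (F : Fin n → Fin n → ℝ) :
    ∑ a ∈ Finset.range n, ∑ b ∈ Finset.range n, liftW F a b = ∑ i : Fin n, ∑ j : Fin n, F i j := by
  rw [← Fin.sum_univ_eq_sum_range (fun a => ∑ b ∈ Finset.range n, liftW F a b) n]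
  refine Finset.sum_congr rfl fun i _ => ?_
  rw [← Fin.sum_univ_eq_sum_range (fun b => liftW F i.val b) n]
  refine Finset.sum_congr rfl fun j _ => ?_
  simp [liftW, i.isLt, j.isLt]

private lemma sum_liftW_col {n : ℕ} (F : Fin n → Fin n → ℝ) {b : ℕ} (hb : b < n) :
    ∑ a ∈ Finset.range n, liftW F a b = ∑ i : Fin n, F i ⟨b, hb⟩ := by
  rw [← Fin.sum_univ_eq_sum_range (fun a => liftW F a b) n]
  refine Finset.sum_congr rfl fun i _ => ?_
  simp [liftW, i.isLt, hb]

private lemma sum_liftW_row {n : ℕ} (F : Fin n → Fin n → ℝ) {b : ℕ} (hb : b < n) :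
    ∑ a ∈ Finset.range n, liftW F b a = ∑ i : Fin n, F ⟨b, hb⟩ i := by
  rw [← Fin.sum_univ_eq_sum_range (fun a => liftW F b a) n]
  refine Finset.sum_congr rfl fun i _ => ?_
  simp [liftW, i.isLt, hb]

/-- The central finite sum inequality, in `Fin n` form. -/
private lemma fin_sum_ineq {n : ℕ} (w : Fin n → Fin n → ℝ) (p q lam : Fin n → ℝ)
    (hw : ∀ i j, 0 ≤ w i j)
    (hbal : ∀ j, ∑ i : Fin n, w i j = ∑ i : Fin n, w j i)
    (hq0 : ∀ i, 0 ≤ q i)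
    (hchain : ∀ i j, lam i ≤ lam j → p i ≤ p j ∧ q i ≤ q j) :
    ∑ i : Fin n, ∑ j : Fin n, w i j * (p i * q j)
      ≤ ∑ i : Fin n, ∑ j : Fin n, w i j * (p j * q j) := by
  classical
  set σ : Equiv.Perm (Fin n) := Tuple.sort lam with hσdef
  have hσ : Monotone (lam ∘ σ) := Tuple.monotone_sort lam
  set F : Fin n → Fin n → ℝ := fun i j => w (σ i) (σ j) with hF
  set P : Fin n → ℝ := fun i => p (σ i) with hP
  set Q : Fin n → ℝ := fun i => q (σ i) with hQ
  -- transfer the two sides through σ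
  have hside1 : ∑ i : Fin n, ∑ j : Fin n, F i j * (P i * Q j)
      = ∑ i : Fin n, ∑ j : Fin n, w i j * (p i * q j) := by
    rw [← Equiv.sum_comp σ (fun a => ∑ j : Fin n, w a j * (p a * q j))]
    exact Finset.sum_congr rfl fun i _ =>
      (Equiv.sum_comp σ (fun b => w (σ i) b * (p (σ i) * q b)))
  have hside2 : ∑ i : Fin n, ∑ j : Fin n, F i j * (P j * Q j)
      = ∑ i : Fin n, ∑ j : Fin n, w i j * (p j * q j) := by
    rw [← Equiv.sum_comp σ (fun a => ∑ j : Fin n, w a j * (p j * q j))]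
    exact Finset.sum_congr rfl fun i _ =>
      (Equiv.sum_comp σ (fun b => w (σ i) b * (p b * q b)))
  rw [← hside1, ← hside2]
  -- now move to ℕ-land
  have e1 : ∑ i : Fin n, ∑ j : Fin n, F i j * (P i * Q j)
      = ∑ a ∈ Finset.range n, ∑ b ∈ Finset.range n, liftW F a b * (liftV P a * liftV Q b) := by
    rw [← sum_liftW (fun i j => F i j * (P i * Q j))]
    refine Finset.sum_congr rfl fun a ha => Finset.sum_congr rfl fun b hb => ?_
    rw [Finset.mem_range] at ha hb
    simp [liftW, liftV, ha, hb]
  have e2 : ∑ i : Fin n, ∑ j : Fin n, F i j * (P j * Q j)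
      = ∑ a ∈ Finset.range n, ∑ b ∈ Finset.range n, liftW F a b * (liftV P b * liftV Q b) := by
    rw [← sum_liftW (fun i j => F i j * (P j * Q j))]
    refine Finset.sum_congr rfl fun a ha => Finset.sum_congr rfl fun b hb => ?_
    rw [Finset.mem_range] at ha hb
    simp [liftW, liftV, ha, hb]
  rw [e1, e2]
  apply core_sum_ineq n (liftW F) (liftV P) (liftV Q)
  · intro i j
    by_cases hi : i < n
    · by_cases hj : j < n
      · simp [liftW, hi, hj, hw, hF]
      · simp [liftW, hi, hj]
    · simp [liftW, hi]
  · intro j hj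
    rw [sum_liftW_col F hj, sum_liftW_row F hj]
    simp only [hF]
    calc ∑ i : Fin n, w (σ i) (σ ⟨j, hj⟩) = ∑ i : Fin n, w i (σ ⟨j, hj⟩) :=
          Equiv.sum_comp σ (fun a => w a (σ ⟨j, hj⟩))
      _ = ∑ i : Fin n, w (σ ⟨j, hj⟩) i := hbal _
      _ = ∑ i : Fin n, w (σ ⟨j, hj⟩) (σ i) :=
          (Equiv.sum_comp σ (fun a => w (σ ⟨j, hj⟩) a)).symm
  · intro i j hij hj
    have hi : i < n := lt_of_le_of_lt hij hj
    simp only [liftV, dif_pos hi, dif_pos hj, hP]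
    have : lam (σ ⟨i, hi⟩) ≤ lam (σ ⟨j, hj⟩) := hσ (by exact hij)
    exact (hchain _ _ this).1
  · intro i j hij hj
    have hi : i < n := lt_of_le_of_lt hij hj
    simp only [liftV, dif_pos hi, dif_pos hj, hQ]
    have : lam (σ ⟨i, hi⟩) ≤ lam (σ ⟨j, hj⟩) := hσ (by exact hij)
    exact (hchain _ _ this).2
  · intro j hj
    simp only [liftV, dif_pos hj, hQ]
    exact hq0 _

private lemma frob_sq {n : ℕ} (X : Matrix (Fin n) (Fin n) ℂ) :
    (Matrix.trace (Xᴴ * X)).re = ∑ i : Fin n, ∑ j : Fin n, Complex.normSq (X j i) := by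
  simp only [Matrix.trace, Matrix.diag, Matrix.mul_apply, Matrix.conjTranspose_apply,
    Complex.re_sum]
  refine Finset.sum_congr rfl fun i _ => Finset.sum_congr rfl fun j _ => ?_
  rw [Complex.star_def, ← Complex.normSq_eq_conj_mul_self, Complex.ofReal_re]

theorem frobenius_chebyshev_monotone {n : ℕ} (A B Z : Matrix (Fin n) (Fin n) ℂ)
    (hA : A.PosSemidef) (hB : B.PosSemidef) (hZ : Zᴴ * Z = Z * Zᴴ)
    (hmono : MonotonePair A B) :
    frobNorm (A * Z * B) ≤ frobNorm (Z * A * B) := by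
  classical
  obtain ⟨C, hC, f, g, hf, hg, hAf, hBg⟩ := hmono
  set U : Matrix (Fin n) (Fin n) ℂ := (hC.eigenvectorUnitary : Matrix (Fin n) (Fin n) ℂ)
    with hUdef
  set lam : Fin n → ℝ := hC.eigenvalues with hlamdef
  have hU1 : Uᴴ * U = 1 := by
    rw [← Matrix.star_eq_conjTranspose]
    exact hC.eigenvectorUnitary.2.1
  have hU2 : U * Uᴴ = 1 := by
    rw [← Matrix.star_eq_conjTranspose]
    exact hC.eigenvectorUnitary.2.2
  have cancel1 : ∀ M : Matrix (Fin n) (Fin n) ℂ, U * (Uᴴ * M) = M := by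
    intro M; rw [← Matrix.mul_assoc, hU2, Matrix.one_mul]
  have cancel2 : ∀ M : Matrix (Fin n) (Fin n) ℂ, Uᴴ * (U * M) = M := by
    intro M; rw [← Matrix.mul_assoc, hU1, Matrix.one_mul]
  set Df : Matrix (Fin n) (Fin n) ℂ := Matrix.diagonal (fun i => (f (lam i) : ℂ)) with hDf
  set Dg : Matrix (Fin n) (Fin n) ℂ := Matrix.diagonal (fun i => (g (lam i) : ℂ)) with hDg
  have hA' : A = U * Df * Uᴴ := by
    rw [hAf]; rfl
  have hB' : B = U * Dg * Uᴴ := by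
    rw [hBg]; rfl
  set Y : Matrix (Fin n) (Fin n) ℂ := Uᴴ * Z * U with hYdef
  have hZY : Z = U * Y * Uᴴ := by
    rw [hYdef]
    simp only [Matrix.mul_assoc, cancel1]
    rw [hU2, Matrix.mul_one]
  have hconj : ∀ M N : Matrix (Fin n) (Fin n) ℂ,
      (U * M * Uᴴ) * (U * N * Uᴴ) = U * (M * N) * Uᴴ := by
    intro M N
    simp only [Matrix.mul_assoc, cancel2]
  have hAZB : A * Z * B = U * (Df * Y * Dg) * Uᴴ := by
    rw [hA', hB', hZY, hconj, hconj]
  have hZAB : Z * A * B = U * (Y * Df * Dg) * Uᴴ := by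
    rw [hA', hB', hZY, hconj, hconj]
  have hfrob : ∀ M : Matrix (Fin n) (Fin n) ℂ, frobNorm (U * M * Uᴴ) = frobNorm M := by
    intro M
    have key : (U * M * Uᴴ)ᴴ * (U * M * Uᴴ) = U * (Mᴴ * M) * Uᴴ := by
      simp only [Matrix.conjTranspose_mul, Matrix.conjTranspose_conjTranspose,
        Matrix.mul_assoc, cancel2]
    rw [frobNorm, frobNorm, key, Matrix.trace_mul_cycle, ← Matrix.mul_assoc, hU1,
      Matrix.one_mul]
  -- normality of Y
  have hYn : Yᴴ * Y = Y * Yᴴ := by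
    rw [hYdef]
    simp only [Matrix.conjTranspose_mul, Matrix.conjTranspose_conjTranspose,
      Matrix.mul_assoc, cancel1]
    have h1 : Zᴴ * (Z * U) = Z * (Zᴴ * U) := by
      rw [← Matrix.mul_assoc, hZ, Matrix.mul_assoc]
    rw [h1]
  set w : Fin n → Fin n → ℝ := fun i j => Complex.normSq (Y i j) with hwdef
  set p : Fin n → ℝ := fun i => f (lam i) ^ 2 with hpdef
  set q : Fin n → ℝ := fun i => g (lam i) ^ 2 with hqdef
  -- nonnegativity of f, g on eigenvalues
  have hDfpsd : Df.PosSemidef := by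
    have h1 : Uᴴ * A * U = Df := by
      rw [hA']
      simp only [Matrix.mul_assoc, cancel2]
      rw [hU1, Matrix.mul_one]
    rw [← h1]
    exact hA.conjTranspose_mul_mul_same U
  have hDgpsd : Dg.PosSemidef := by
    have h1 : Uᴴ * B * U = Dg := by
      rw [hB']
      simp only [Matrix.mul_assoc, cancel2]
      rw [hU1, Matrix.mul_one]
    rw [← h1]
    exact hB.conjTranspose_mul_mul_same U
  have hfnn : ∀ i, 0 ≤ f (lam i) := by
    intro i
    have := (Matrix.posSemidef_diagonal_iff.mp (hDf ▸ hDfpsd)) i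
    exact Complex.zero_le_real.mp this
  have hgnn : ∀ i, 0 ≤ g (lam i) := by
    intro i
    have := (Matrix.posSemidef_diagonal_iff.mp (hDg ▸ hDgpsd)) i
    exact Complex.zero_le_real.mp this
  -- balance condition from normality
  have hbal : ∀ j, ∑ i : Fin n, w i j = ∑ i : Fin n, w j i := by
    intro j
    have h := congrFun (congrFun hYn j) j
    simp only [Matrix.mul_apply, Matrix.conjTranspose_apply] at h
    have h' := congrArg Complex.re h
    simp only [Complex.re_sum] at h'
    calc ∑ i : Fin n, w i j = ∑ i : Fin n, ((starRingEnd ℂ) (Y i j) * Y i j).re := by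
          refine Finset.sum_congr rfl fun i _ => ?_
          rw [← Complex.normSq_eq_conj_mul_self, Complex.ofReal_re]
      _ = ∑ i : Fin n, (Y j i * (starRingEnd ℂ) (Y j i)).re := h'
      _ = ∑ i : Fin n, w j i := by
          refine Finset.sum_congr rfl fun i _ => ?_
          rw [Complex.mul_conj, Complex.ofReal_re]
  have hchain : ∀ i j, lam i ≤ lam j → p i ≤ p j ∧ q i ≤ q j := by
    intro i j hij
    constructor
    · exact pow_le_pow_left₀ (hfnn i) (hf hij) 2
    · exact pow_le_pow_left₀ (hgnn i) (hg hij) 2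
  have key := fin_sum_ineq w p q lam (fun i j => Complex.normSq_nonneg _) hbal
    (fun i => sq_nonneg _) hchain
  -- put everything together
  rw [hAZB, hZAB, hfrob, hfrob, frobNorm, frobNorm]
  apply Real.sqrt_le_sqrt
  rw [frob_sq, frob_sq]
  have lhs_eq : ∑ i : Fin n, ∑ j : Fin n, Complex.normSq ((Df * Y * Dg) j i)
      = ∑ i : Fin n, ∑ j : Fin n, w i j * (p i * q j) := by
    rw [Finset.sum_comm]
    refine Finset.sum_congr rfl fun i _ => Finset.sum_congr rfl fun j _ => ?_
    rw [Matrix.mul_diagonal, Matrix.diagonal_mul, Complex.normSq_mul, Complex.normSq_mul,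
      Complex.normSq_ofReal, Complex.normSq_ofReal]
    simp only [hwdef, hpdef, hqdef]
    ring
  have rhs_eq : ∑ i : Fin n, ∑ j : Fin n, Complex.normSq ((Y * Df * Dg) j i)
      = ∑ i : Fin n, ∑ j : Fin n, w i j * (p j * q j) := by
    rw [Finset.sum_comm]
    refine Finset.sum_congr rfl fun i _ => Finset.sum_congr rfl fun j _ => ?_
    rw [Matrix.mul_diagonal, Matrix.mul_diagonal, Complex.normSq_mul, Complex.normSq_mul,
      Complex.normSq_ofReal, Complex.normSq_ofReal]
    simp only [hwdef, hpdef, hqdef]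
    ring
  rw [lhs_eq, rhs_eq]
  exact key
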